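/- Let V be a four-dimensional real vector space and let ω₁, ω₂, ω₃ be nondegenerate alternating bilinear forms on V with recursion operators A₁, A₂, A₃ (defined by ω_i(x,y) = ω_{i+1}(A_{i+2} x, y), indices mod 3) satisfying A₁² = A₂² = A₃² = −Id. Then the associated symmetric bilinear form g(x,y) := ω₁(x, A₁ y) is definite: either g is positive definite or −g is positive definite. (In particular, every hyperholomorphic symplectic structure in complex dimension two is hyper-Kähler.) -/

import Mathlib

set_option maxHeartbeats 1000000


/-- For a hyperholomorphic symplectic structure on a four-dimensional real
vector space, the associated symmetric bilinear form `g(x,y) = ω₁(x, A₁ y)` is definite: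
either `g` or `-g` is positive definite.  (Every hyperholomorphic symplectic structure in
complex dimension two is hyper-Kähler.) -/
theorem hyperholomorphic_dim_four_metric_definite
    (V : Type*) [AddCommGroup V] [Module ℝ V] [FiniteDimensional ℝ V]
    (h4 : Module.finrank ℝ V = 4)
    (ω₁ ω₂ ω₃ : V →ₗ[ℝ] V →ₗ[ℝ] ℝ)
    (h₁_alt : ∀ x : V, ω₁ x x = 0) (h₂_alt : ∀ x : V, ω₂ x x = 0)
    (h₃_alt : ∀ x : V, ω₃ x x = 0)
    (h₁_nd : ∀ x : V, (∀ y : V, ω₁ x y = 0) → x = 0)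
    (h₂_nd : ∀ x : V, (∀ y : V, ω₂ x y = 0) → x = 0)
    (h₃_nd : ∀ x : V, (∀ y : V, ω₃ x y = 0) → x = 0)
    (A₁ A₂ A₃ : V →ₗ[ℝ] V)
    (hA₃ : ∀ x y : V, ω₁ x y = ω₂ (A₃ x) y)
    (hA₁ : ∀ x y : V, ω₂ x y = ω₃ (A₁ x) y)
    (hA₂ : ∀ x y : V, ω₃ x y = ω₁ (A₂ x) y)
    (hA₁2 : A₁ ∘ₗ A₁ = -LinearMap.id)
    (hA₂2 : A₂ ∘ₗ A₂ = -LinearMap.id)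
    (hA₃2 : A₃ ∘ₗ A₃ = -LinearMap.id) :
    (∀ x : V, x ≠ 0 → 0 < ω₁ x (A₁ x)) ∨ (∀ x : V, x ≠ 0 → ω₁ x (A₁ x) < 0) := by
  have sq₁ : ∀ v : V, A₁ (A₁ v) = -v := fun v => by
    simpa using LinearMap.congr_fun hA₁2 v
  have sq₂ : ∀ v : V, A₂ (A₂ v) = -v := fun v => by
    simpa using LinearMap.congr_fun hA₂2 v
  have sq₃ : ∀ v : V, A₃ (A₃ v) = -v := fun v => by
    simpa using LinearMap.congr_fun hA₃2 v
  have skew₁ : ∀ u v : V, ω₁ u v = -ω₁ v u := by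
    intro u v
    have h := h₁_alt (u + v)
    simp only [map_add, LinearMap.add_apply, h₁_alt] at h
    linarith
  have skew₂ : ∀ u v : V, ω₂ u v = -ω₂ v u := by
    intro u v
    have h := h₂_alt (u + v)
    simp only [map_add, LinearMap.add_apply, h₂_alt] at h
    linarith
  have skew₃ : ∀ u v : V, ω₃ u v = -ω₃ v u := by
    intro u v
    have h := h₃_alt (u + v)
    simp only [map_add, LinearMap.add_apply, h₃_alt] at h
    linarith
  have comp321 : ∀ v : V, A₂ (A₁ (A₃ v)) = v := by
    intro v
    have h : ∀ y : V, ω₁ (A₂ (A₁ (A₃ v)) - v) y = 0 := by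
      intro y
      have e : ω₁ (A₂ (A₁ (A₃ v))) y = ω₁ v y := by rw [← hA₂, ← hA₁, ← hA₃]
      simp [map_sub, LinearMap.sub_apply, e]
    exact sub_eq_zero.mp (h₁_nd _ h)
  have comp132 : ∀ v : V, A₁ (A₃ (A₂ v)) = v := by
    intro v
    have h : ∀ y : V, ω₃ (A₁ (A₃ (A₂ v)) - v) y = 0 := by
      intro y
      have e : ω₃ (A₁ (A₃ (A₂ v))) y = ω₃ v y := by rw [← hA₁, ← hA₃, ← hA₂]
      simp [map_sub, LinearMap.sub_apply, e]
    exact sub_eq_zero.mp (h₃_nd _ h)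
  have comp213 : ∀ v : V, A₃ (A₂ (A₁ v)) = v := by
    intro v
    have h : ∀ y : V, ω₂ (A₃ (A₂ (A₁ v)) - v) y = 0 := by
      intro y
      have e : ω₂ (A₃ (A₂ (A₁ v))) y = ω₂ v y := by rw [← hA₃, ← hA₂, ← hA₁]
      simp [map_sub, LinearMap.sub_apply, e]
    exact sub_eq_zero.mp (h₂_nd _ h)
  have m21 : ∀ v : V, A₂ (A₁ v) = -A₃ v := by
    intro v
    have h := comp321 (-(A₃ v))
    simp only [map_neg, sq₃, neg_neg] at h
    exact h
  have m13 : ∀ v : V, A₁ (A₃ v) = -A₂ v := by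
    intro v
    have h := comp132 (-(A₂ v))
    simp only [map_neg, sq₂, neg_neg] at h
    exact h
  have m32 : ∀ v : V, A₃ (A₂ v) = -A₁ v := by
    intro v
    have h := comp213 (-(A₁ v))
    simp only [map_neg, sq₁, neg_neg] at h
    exact h
  have p12 : ∀ v : V, A₁ (A₂ v) = A₃ v := by
    intro v
    have h := congrArg A₁ (m13 v)
    rw [sq₁, map_neg] at h
    exact (neg_inj.mp h).symm
  have p23 : ∀ v : V, A₂ (A₃ v) = A₁ v := by
    intro v
    have h := congrArg A₂ (m21 v)
    rw [sq₂, map_neg] at h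
    exact (neg_inj.mp h).symm
  have p31 : ∀ v : V, A₃ (A₁ v) = A₂ v := by
    intro v
    have h := congrArg A₃ (m32 v)
    rw [sq₃, map_neg] at h
    exact (neg_inj.mp h).symm
  have sadj₃ : ∀ u v : V, ω₂ (A₃ u) v = ω₂ u (A₃ v) := by
    intro u v
    rw [← hA₃, skew₁, hA₃, ← skew₂]
  have sadj₁ : ∀ u v : V, ω₃ (A₁ u) v = ω₃ u (A₁ v) := by
    intro u v
    rw [← hA₁, skew₂, hA₁, ← skew₃]
  have sadj₂ : ∀ u v : V, ω₁ (A₂ u) v = ω₁ u (A₂ v) := by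
    intro u v
    rw [← hA₂, skew₃, hA₂, ← skew₁]
  have g12 : ∀ u v : V, ω₁ u (A₁ v) = ω₂ u (A₂ v) := by
    intro u v
    rw [hA₃ u, sadj₃, p31]
  have g23 : ∀ u v : V, ω₂ u (A₂ v) = ω₃ u (A₃ v) := by
    intro u v
    rw [hA₁ u, sadj₁, p12]
  have g13 : ∀ u v : V, ω₁ u (A₁ v) = ω₃ u (A₃ v) := fun u v => (g12 u v).trans (g23 u v)
  have sadj₁₂ : ∀ u v : V, ω₂ (A₁ u) v = ω₂ u (A₁ v) := by
    intro u v
    rw [hA₁ (A₁ u), sq₁, hA₁ u, sadj₁, sq₁]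
    simp
  have skewadj₁ : ∀ u v : V, ω₁ (A₁ u) v = -ω₁ u (A₁ v) := by
    intro u v
    rw [hA₃ (A₁ u), sadj₃, sadj₁₂, m13, map_neg, g12 u v]
  have gsymm : ∀ u v : V, ω₁ u (A₁ v) = ω₁ v (A₁ u) := by
    intro u v
    rw [skew₁ u (A₁ v), skewadj₁, neg_neg]
  -- the quadratic form is anisotropic
  have aniso : ∀ x : V, ω₁ x (A₁ x) = 0 → x = 0 := by
    intro x hq
    by_contra hx0
    set B : LinearMap.BilinForm ℝ V := ω₁.compl₂ A₁ with hB
    have hBapp : ∀ u v : V, B u v = ω₁ u (A₁ v) := fun u v => rfl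
    have hrefl : B.IsRefl := by
      intro u v h
      rw [hBapp] at h ⊢
      rw [gsymm]; exact h
    have hnd : B.Nondegenerate := by
      refine (LinearMap.IsRefl.nondegenerate_iff_separatingLeft hrefl).mpr ?_
      intro u hu
      apply h₁_nd
      intro y
      have h := hu (-(A₁ y))
      rw [hBapp, map_neg, sq₁, neg_neg] at h
      exact h
    set s : Set V := {x, A₁ x, A₂ x, A₃ x} with hs
    -- orthogonality relations on generators
    have bx1 : ω₁ x (A₁ (A₁ x)) = 0 := by
      rw [sq₁, map_neg, h₁_alt, neg_zero]
    have bx2 : ω₁ x (A₁ (A₂ x)) = 0 := by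
      rw [g12, sq₂, map_neg, h₂_alt, neg_zero]
    have bx3 : ω₁ x (A₁ (A₃ x)) = 0 := by
      rw [g13, sq₃, map_neg, h₃_alt, neg_zero]
    have b11 : ω₁ (A₁ x) (A₁ (A₁ x)) = 0 := by
      rw [sq₁, map_neg, skew₁, neg_neg]; exact hq
    have b12 : ω₁ (A₁ x) (A₁ (A₂ x)) = 0 := by
      rw [g13, m32, map_neg, h₃_alt, neg_zero]
    have b13 : ω₁ (A₁ x) (A₁ (A₃ x)) = 0 := by
      rw [g12, p23, h₂_alt]
    have b22 : ω₁ (A₂ x) (A₁ (A₂ x)) = 0 := by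
      rw [p12, sadj₂, p23]; exact hq
    have b23 : ω₁ (A₂ x) (A₁ (A₃ x)) = 0 := by
      rw [m13, map_neg, h₁_alt, neg_zero]
    have b33 : ω₁ (A₃ x) (A₁ (A₃ x)) = 0 := by
      rw [m13, map_neg, ← sadj₂, p23, skew₁, hq, neg_zero, neg_zero]
    have key : ∀ u ∈ s, ∀ v ∈ s, B u v = 0 := by
      intro u hu v hv
      simp only [hs, Set.mem_insert_iff, Set.mem_singleton_iff] at hu hv
      rcases hu with rfl | rfl | rfl | rfl <;> rcases hv with rfl | rfl | rfl | rfl <;>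
          rw [hBapp] <;>
        first
          | exact hq | exact bx1 | exact bx2 | exact bx3
          | exact b11 | exact b12 | exact b13 | exact b22 | exact b23 | exact b33
          | (rw [gsymm]
             first
               | exact bx1 | exact bx2 | exact bx3
               | exact b12 | exact b13 | exact b23)
    have step1 : ∀ u ∈ s, ∀ v ∈ Submodule.span ℝ s, B u v = 0 := by
      intro u hu v hv
      induction hv using Submodule.span_induction with
      | mem w hw => exact key u hu w hw
      | zero => simp
      | add a b _ _ ha hb => rw [map_add, ha, hb, add_zero]
      | smul c a _ ha => rw [map_smul, ha, smul_zero]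
    have step2 : ∀ u ∈ Submodule.span ℝ s, ∀ v ∈ Submodule.span ℝ s, B u v = 0 := by
      intro u hu v hv
      induction hu using Submodule.span_induction with
      | mem w hw => exact step1 w hw v hv
      | zero => simp
      | add a b _ _ ha hb =>
        rw [map_add, LinearMap.add_apply, ha, hb, add_zero]
      | smul c a _ ha =>
        rw [map_smul, LinearMap.smul_apply, ha, smul_zero]
    set S := Submodule.span ℝ s with hSdef
    have hSorth : S ≤ B.orthogonal S := by
      intro v hv
      rw [LinearMap.BilinForm.mem_orthogonal_iff]
      intro n hn
      exact step2 n hn v hv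
    have hfr := LinearMap.BilinForm.finrank_orthogonal hnd S
    have hle2 : Module.finrank ℝ S ≤ 2 := by
      have h1 : Module.finrank ℝ S ≤ Module.finrank ℝ (B.orthogonal S) :=
        Submodule.finrank_mono hSorth
      rw [hfr, h4] at h1
      have h2 : Module.finrank ℝ S ≤ 4 := h4 ▸ Submodule.finrank_le S
      omega
    have hind : LinearIndependent ℝ ![x, A₁ x] := by
      rw [LinearIndependent.pair_iff]
      intro a b hab0
      have h2' : a • A₁ x + b • A₁ (A₁ x) = 0 := by
        have h := congrArg A₁ hab0
        rwa [map_add, map_smul, map_smul, map_zero] at h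
      have key2 : (a * a + b * b) • x = 0 := by
        linear_combination (norm := module) a • hab0 - b • h2' + (b * b) • sq₁ x
      have hz : a * a + b * b = 0 := by
        rcases smul_eq_zero.mp key2 with h | h
        · exact h
        · exact absurd h hx0
      constructor <;> nlinarith [sq_nonneg a, sq_nonneg b]
    have hsub : ({x, A₁ x} : Set V) ⊆ s := by
      intro z hz
      simp only [Set.mem_insert_iff, Set.mem_singleton_iff] at hz
      rcases hz with rfl | rfl
      · exact Set.mem_insert _ _
      · simp [hs]
    have hTle : Submodule.span ℝ ({x, A₁ x} : Set V) ≤ S := Submodule.span_mono hsub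
    have hT2 : Module.finrank ℝ (Submodule.span ℝ ({x, A₁ x} : Set V)) = 2 := by
      have h := finrank_span_eq_card (R := ℝ) hind
      have hr : Set.range ![x, A₁ x] = ({x, A₁ x} : Set V) := by
        simp only [Matrix.range_cons, Matrix.range_empty, Set.union_empty,
          Set.union_singleton]
        exact Set.pair_comm _ _
      rw [hr] at h
      simpa using h
    have hST : Submodule.span ℝ ({x, A₁ x} : Set V) = S :=
      Submodule.eq_of_le_of_finrank_le hTle (by rw [hT2]; exact hle2)
    have hmem : A₂ x ∈ Submodule.span ℝ ({x, A₁ x} : Set V) := by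
      rw [hST]
      exact Submodule.subset_span (by simp [hs])
    obtain ⟨a, b, hab⟩ := Submodule.mem_span_pair.mp hmem
    have h1 : a • A₂ x + b • A₂ (A₁ x) = -x := by
      have h := congrArg A₂ hab
      rwa [map_add, map_smul, map_smul, sq₂] at h
    have h2 : a • A₁ x + b • A₁ (A₁ x) = A₃ x := by
      have h := congrArg A₁ hab
      rwa [map_add, map_smul, map_smul, p12] at h
    have key3 : (1 + (a * a + b * b)) • x = 0 := by
      linear_combination (norm := module)
        h1 + a • hab - b • m21 x - b • h2 + (b * b) • sq₁ x
    rcases smul_eq_zero.mp key3 with h | h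
    · nlinarith [sq_nonneg a, sq_nonneg b]
    · exact hx0 h
  -- definiteness from anisotropy via the intermediate value theorem
  by_contra hcon
  push_neg at hcon
  obtain ⟨⟨y, hy0, hy⟩, ⟨z, hz0, hz⟩⟩ := hcon
  -- q y ≤ 0 and q z ≥ 0, both nonzero
  have hyneg : ω₁ y (A₁ y) < 0 :=
    lt_of_le_of_ne hy fun h => hy0 (aniso y h)
  have hzpos : 0 < ω₁ z (A₁ z) :=
    lt_of_le_of_ne hz fun h => hz0 (aniso z h.symm)
  set f : ℝ → ℝ := fun t => ω₁ (t • z + (1 - t) • y) (A₁ (t • z + (1 - t) • y)) with hf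
  have hfe : f = fun t => t ^ 2 * ω₁ z (A₁ z) +
      (t * (1 - t)) * (ω₁ z (A₁ y) + ω₁ y (A₁ z)) + (1 - t) ^ 2 * ω₁ y (A₁ y) := by
    funext t
    simp only [hf, map_add, map_smul, LinearMap.add_apply, LinearMap.smul_apply, smul_eq_mul]
    ring
  have hcont : Continuous f := by
    rw [hfe]; fun_prop
  have hf0 : f 0 = ω₁ y (A₁ y) := by simp [hf]
  have hf1 : f 1 = ω₁ z (A₁ z) := by simp [hf]
  have hmem0 : (0 : ℝ) ∈ Set.Icc (f 0) (f 1) := by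
    rw [hf0, hf1]
    exact ⟨le_of_lt hyneg, le_of_lt hzpos⟩
  obtain ⟨t, _, ht⟩ := intermediate_value_Icc zero_le_one hcont.continuousOn hmem0
  have hv0 : t • z + (1 - t) • y = 0 := aniso _ ht
  by_cases ht0 : t = 0
  · apply hy0
    rw [ht0] at hv0
    simpa using hv0
  · -- z is a multiple of y, contradicting the signs
    have hzy : z = (t⁻¹ * -(1 - t)) • y := by
      have h5 : t • z = -((1 - t) • y) := eq_neg_of_add_eq_zero_left hv0
      have h6 := congrArg (fun w => t⁻¹ • w) h5
      simp only [smul_smul, inv_mul_cancel₀ ht0, one_smul, smul_neg] at h6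
      rw [h6, ← neg_smul]
      congr 1
      ring
    have hq : ω₁ z (A₁ z) =
        (t⁻¹ * -(1 - t)) * ((t⁻¹ * -(1 - t)) * ω₁ y (A₁ y)) := by
      rw [hzy]
      simp [map_smul, LinearMap.smul_apply, smul_eq_mul]
    nlinarith [sq_nonneg (t⁻¹ * -(1 - t))]
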